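/- Let (ν¹_k)_{k≥1} and (ν²_k)_{k≥1} be sequences of nonnegative finite measures on a measurable space M with ∑_k ν^i_k = ν^i probability measures, and let T : M → M be measurable. Suppose T^k_* ν¹_k = T^k_* ν²_k for every k, and ∑_{k>n} ν^i_k(M) ≤ (1−Θ)^{n/N} for i = 1,2 and all n ≥ 0, where Θ ∈ (0,1) and N ≥ 1. Then for every n ≥ 0, ‖T^n_* ν¹ − T^n_* ν²‖_{TV} ≤ 2(1−Θ)^{n/N}. -/

import Mathlib

open MeasureTheory
open scoped ENNReal

/-- The total variation norm `‖μ − ν‖_TV = |μ − ν|(univ)` of the difference of two finite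
measures, expressed via the Hahn–Jordan formula
`|μ − ν|(univ) = sup_A [(μ(A) − ν(A)) + (ν(Aᶜ) − μ(Aᶜ))]`. -/
noncomputable def tvDist {α : Type*} [MeasurableSpace α] (μ ν : Measure α) : ℝ≥0∞ :=
  ⨆ (A : Set α) (_ : MeasurableSet A), ((μ A - ν A) + (ν Aᶜ - μ Aᶜ))

/-- The equidistribution estimate from the coupling lemma: if the pieces `ν¹_k, ν²_k` are
coupled after `k` iterations and the tails decay like `(1−Θ)^{n/N}`, then
`‖T^n_* ν¹ − T^n_* ν²‖_TV ≤ 2(1−Θ)^{n/N}`. -/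
theorem stmt8 {M : Type*} [MeasurableSpace M] (T : M → M) (hT : Measurable T)
    (ν₁ ν₂ : ℕ → Measure M) (hf₁ : ∀ k, IsFiniteMeasure (ν₁ k))
    (hf₂ : ∀ k, IsFiniteMeasure (ν₂ k))
    (μ₁ μ₂ : Measure M) [IsProbabilityMeasure μ₁] [IsProbabilityMeasure μ₂]
    (hμ₁ : μ₁ = Measure.sum ν₁) (hμ₂ : μ₂ = Measure.sum ν₂)
    (Θ : ℝ) (N : ℕ) (hΘ : Θ ∈ Set.Ioo (0:ℝ) 1) (hN : 1 ≤ N)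
    (hcouple : ∀ k, Measure.map (T^[k]) (ν₁ k) = Measure.map (T^[k]) (ν₂ k))
    (htail₁ : ∀ n : ℕ, (∑' k : ℕ, if n < k then ν₁ k Set.univ else 0) ≤
      ENNReal.ofReal ((1 - Θ) ^ ((n:ℝ) / (N:ℝ))))
    (htail₂ : ∀ n : ℕ, (∑' k : ℕ, if n < k then ν₂ k Set.univ else 0) ≤
      ENNReal.ofReal ((1 - Θ) ^ ((n:ℝ) / (N:ℝ)))) :
    ∀ n : ℕ, tvDist (Measure.map (T^[n]) μ₁) (Measure.map (T^[n]) μ₂) ≤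
      ENNReal.ofReal (2 * (1 - Θ) ^ ((n:ℝ) / (N:ℝ))) := by
  intro n
  set t : ℝ := (1 - Θ) ^ ((n:ℝ) / (N:ℝ)) with ht_def
  have ht : 0 ≤ t := Real.rpow_nonneg (by linarith [hΘ.2]) _
  -- key symmetric estimate
  have key : ∀ (ρ σ : ℕ → Measure M),
      (∀ k, Measure.map (T^[k]) (ρ k) = Measure.map (T^[k]) (σ k)) →
      (∑' k : ℕ, if n < k then ρ k Set.univ else 0) ≤ ENNReal.ofReal t →
      ∀ A : Set M, MeasurableSet A →
      Measure.map (T^[n]) (Measure.sum ρ) A ≤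
        Measure.map (T^[n]) (Measure.sum σ) A + ENNReal.ofReal t := by
    intro ρ σ hc htail A hA
    have hpre : MeasurableSet ((T^[n]) ⁻¹' A) := (hT.iterate n) hA
    rw [Measure.map_apply (hT.iterate n) hA, Measure.map_apply (hT.iterate n) hA,
      Measure.sum_apply _ hpre, Measure.sum_apply _ hpre]
    calc (∑' k, ρ k ((T^[n]) ⁻¹' A))
        ≤ ∑' k, (σ k ((T^[n]) ⁻¹' A) + if n < k then ρ k Set.univ else 0) := by
          refine ENNReal.tsum_le_tsum fun k => ?_
          by_cases hk : n < k
          · simp only [hk, if_true]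
            exact le_add_left (measure_mono (Set.subset_univ _))
          · simp only [hk, if_false, add_zero]
            push_neg at hk
            have hn : n - k + k = n := Nat.sub_add_cancel hk
            have hcomp : T^[n] = T^[n - k] ∘ T^[k] := by
              rw [← Function.iterate_add T (n - k) k, hn]
            have : Measure.map (T^[n]) (ρ k) = Measure.map (T^[n]) (σ k) := by
              rw [hcomp, ← Measure.map_map (hT.iterate (n - k)) (hT.iterate k),
                ← Measure.map_map (hT.iterate (n - k)) (hT.iterate k), hc k]
            have h1 := Measure.map_apply (hT.iterate n) hA (μ := ρ k)
            have h2 := Measure.map_apply (hT.iterate n) hA (μ := σ k)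
            rw [← h1, ← h2, this]
      _ = (∑' k, σ k ((T^[n]) ⁻¹' A)) + ∑' k, (if n < k then ρ k Set.univ else 0) :=
          ENNReal.tsum_add
      _ ≤ (∑' k, σ k ((T^[n]) ⁻¹' A)) + ENNReal.ofReal t := add_le_add_right htail _
  rw [hμ₁, hμ₂, tvDist]
  refine iSup₂_le fun A hA => ?_
  have h1 := key ν₁ ν₂ hcouple (htail₁ n) A hA
  have h2 := key ν₂ ν₁ (fun k => (hcouple k).symm) (htail₂ n) Aᶜ hA.compl
  calc (Measure.map (T^[n]) (Measure.sum ν₁) A - Measure.map (T^[n]) (Measure.sum ν₂) A)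
        + (Measure.map (T^[n]) (Measure.sum ν₂) Aᶜ - Measure.map (T^[n]) (Measure.sum ν₁) Aᶜ)
      ≤ ENNReal.ofReal t + ENNReal.ofReal t := by
        gcongr
        · exact tsub_le_iff_right.mpr (by rw [add_comm]; exact h1)
        · exact tsub_le_iff_right.mpr (by rw [add_comm]; exact h2)
    _ = ENNReal.ofReal (2 * t) := by
        rw [two_mul, ENNReal.ofReal_add ht ht]
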